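/- For vectors X, Y in ℝ^n: X ≺ Y if and only if F(X) ≤ F(Y) for every convex symmetric function F : ℝ^n → ℝ. -/

import Mathlib

set_option maxRecDepth 8000

open Finset

/-- `X` is majorized by `Y`: equal total sums and, for the nondecreasing
rearrangements, the tail sums (sums of largest coordinates) of `X` are
dominated by those of `Y`. -/
def IsMajorizedBy {n : ℕ} (X Y : Fin n → ℝ) : Prop :=
  (∑ i, X i = ∑ i, Y i) ∧
  ∀ k : Fin n, ∑ i ∈ Finset.Ici k, X (Tuple.sort X i) ≤
    ∑ i ∈ Finset.Ici k, Y (Tuple.sort Y i)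




lemma abel_tail_mono {n : ℕ} (a x y : Fin n → ℝ) (ha : Monotone a)
    (hsum : ∑ i, x i = ∑ i, y i)
    (htail : ∀ k : Fin n, ∑ i ∈ Finset.Ici k, x i ≤ ∑ i ∈ Finset.Ici k, y i) :
    ∑ i, a i * x i ≤ ∑ i, a i * y i := by
  classical
  set A : ℕ → ℝ := fun i => if h : i < n then a ⟨i, h⟩ else 0 with hA
  set b : Fin n → ℝ := fun k => A k - A (k + 1) with hb
  have hrep : ∀ i : Fin n, a i = ∑ k ∈ Ici i, b k := by
    intro i
    have h1 : ∑ k ∈ Ici i, b k = ∑ k ∈ Ico (i : ℕ) n, (A k - A (k + 1)) := by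
      rw [show (Ici i : Finset (Fin n)) = univ.filter (fun k => i ≤ k) by
        ext k; simp]
      rw [Finset.sum_filter]
      have heq : ∀ k : Fin n, (if i ≤ k then b k else 0)
          = (fun m => if (i : ℕ) ≤ m then A m - A (m + 1) else 0) (k : ℕ) := by
        intro k
        by_cases h : i ≤ k
        · rw [if_pos h]
          exact (if_pos (show (i : ℕ) ≤ (k : ℕ) from h)).symm
        · rw [if_neg h]
          exact (if_neg (fun hc => h (by exact_mod_cast hc))).symm
      rw [Finset.sum_congr rfl fun k _ => heq k,
        Fin.sum_univ_eq_sum_range (fun m => if (i : ℕ) ≤ m then A m - A (m + 1) else 0) n,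
        ← Finset.sum_filter]
      congr 1
      ext k; simp only [Finset.mem_Ico, Finset.mem_filter, Finset.mem_range]; omega
    have h2 : ∑ k ∈ range (n - (i : ℕ)), (A ((i : ℕ) + k) - A ((i : ℕ) + k + 1))
        = a i := by
      have h3 := Finset.sum_range_sub' (fun k => A ((i : ℕ) + k)) (n - (i : ℕ))
      simp only [Nat.add_zero] at h3
      rw [show (i : ℕ) + (n - (i : ℕ)) = n by omega] at h3
      rw [Finset.sum_congr rfl fun k _ => by rw [Nat.add_assoc], h3]
      simp [hA, i.isLt, lt_irrefl]
    rw [h1, Finset.sum_Ico_eq_sum_range, h2]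
  have hswap : ∀ z : Fin n → ℝ,
      ∑ i, a i * z i = ∑ k, b k * ∑ i ∈ Iic k, z i := by
    intro z
    calc ∑ i, a i * z i = ∑ i, ∑ k ∈ Ici i, b k * z i := by
          refine Finset.sum_congr rfl fun i _ => ?_
          rw [hrep i, Finset.sum_mul]
      _ = ∑ k, ∑ i ∈ Iic k, b k * z i := by
          exact Finset.sum_comm' (s := univ) (t := fun i => Ici i) (t' := univ)
            (s' := fun k => Iic k)
            (fun i k => by simp only [Finset.mem_univ, Finset.mem_Ici, Finset.mem_Iic,
              true_and, and_true])
      _ = ∑ k, b k * ∑ i ∈ Iic k, z i := by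
          refine Finset.sum_congr rfl fun k _ => ?_
          rw [Finset.mul_sum]
  rw [hswap x, hswap y]
  refine Finset.sum_le_sum fun k _ => ?_
  by_cases hk : (k : ℕ) + 1 < n
  · have hb0 : b k ≤ 0 := by
      have h5 : a k ≤ a ⟨(k : ℕ) + 1, hk⟩ := ha (by simp [Fin.le_def])
      have : A k = a k := by simp [hA, k.isLt]
      have h6 : A ((k : ℕ) + 1) = a ⟨(k : ℕ) + 1, hk⟩ := by simp [hA, hk]
      simp only [hb, this, h6, sub_nonpos]
      exact h5
    have hIoi : ∀ z : Fin n → ℝ, ∑ i ∈ Iic k, z i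
        = ∑ i, z i - ∑ i ∈ Ici (⟨(k : ℕ) + 1, hk⟩ : Fin n), z i := by
      intro z
      have hcompl : (Ici (⟨(k : ℕ) + 1, hk⟩ : Fin n) : Finset (Fin n)) = (Iic k)ᶜ := by
        ext j
        simp only [Finset.mem_Ici, Finset.mem_compl, Finset.mem_Iic, Fin.le_def]
        omega
      rw [hcompl, eq_sub_iff_add_eq, Finset.sum_add_sum_compl]
    rw [hIoi x, hIoi y]
    have h4 : ∑ i, y i - ∑ i ∈ Ici (⟨(k : ℕ) + 1, hk⟩ : Fin n), y i
        ≤ ∑ i, x i - ∑ i ∈ Ici (⟨(k : ℕ) + 1, hk⟩ : Fin n), x i := by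
      have := htail ⟨(k : ℕ) + 1, hk⟩
      linarith
    exact mul_le_mul_of_nonpos_left h4 hb0
  · have : (Iic k : Finset (Fin n)) = univ := by
      ext j; simp only [Finset.mem_Iic, Finset.mem_univ, iff_true, Fin.le_def]; omega
    rw [this, hsum]



lemma key_perm {n : ℕ} {X Y : Fin n → ℝ} (h : IsMajorizedBy X Y) (c : Fin n → ℝ) :
    ∃ σ : Equiv.Perm (Fin n), ∑ i, c i * X i ≤ ∑ i, c i * Y (σ i) := by
  obtain ⟨hsum, htail⟩ := h
  set τc := Tuple.sort c with hτc
  set τX := Tuple.sort X with hτX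
  set τY := Tuple.sort Y with hτY
  have hac : Monotone (c ∘ τc) := Tuple.monotone_sort c
  have hbX : Monotone (X ∘ τX) := Tuple.monotone_sort X
  have hbY : Monotone (Y ∘ τY) := Tuple.monotone_sort Y
  refine ⟨τc⁻¹.trans τY, ?_⟩
  have step1 : ∑ i, c i * X i ≤ ∑ j, (c ∘ τc) j * (X ∘ τX) j := by
    have hmono : Monovary (c ∘ τc) (X ∘ τX) := hac.monovary hbX
    have hre := hmono.sum_smul_comp_perm_le_sum_smul (σ := τc.trans τX⁻¹)
    simp only [smul_eq_mul] at hre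
    refine le_trans (le_of_eq ?_) hre
    rw [← Equiv.sum_comp τc (fun i => c i * X i)]
    refine Finset.sum_congr rfl fun j _ => ?_
    simp [Function.comp, Equiv.trans_apply]
  have step2 : ∑ j, (c ∘ τc) j * (X ∘ τX) j ≤ ∑ j, (c ∘ τc) j * (Y ∘ τY) j := by
    refine abel_tail_mono _ _ _ hac ?_ ?_
    · simpa only [Function.comp] using
        (Equiv.sum_comp τX X).trans (hsum.trans (Equiv.sum_comp τY Y).symm)
    · exact htail
  have step3 : ∑ j, (c ∘ τc) j * (Y ∘ τY) j = ∑ i, c i * Y ((τc⁻¹.trans τY) i) := by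
    rw [← Equiv.sum_comp τc (fun i => c i * Y ((τc⁻¹.trans τY) i))]
    refine Finset.sum_congr rfl fun j _ => ?_
    simp [Function.comp, Equiv.trans_apply]
  calc ∑ i, c i * X i ≤ ∑ j, (c ∘ τc) j * (X ∘ τX) j := step1
    _ ≤ ∑ j, (c ∘ τc) j * (Y ∘ τY) j := step2
    _ = ∑ i, c i * Y ((τc⁻¹.trans τY) i) := step3

lemma mem_hull {n : ℕ} {X Y : Fin n → ℝ} (h : IsMajorizedBy X Y) :
    X ∈ convexHull ℝ (Set.range fun σ : Equiv.Perm (Fin n) => Y ∘ σ) := by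
  by_contra hX
  have hfin : (Set.range fun σ : Equiv.Perm (Fin n) => Y ∘ σ).Finite := Set.finite_range _
  have hclosed : IsClosed (convexHull ℝ (Set.range fun σ : Equiv.Perm (Fin n) => Y ∘ σ)) :=
    (hfin.isCompact_convexHull (𝕜 := ℝ)).isClosed
  obtain ⟨f, u, hfu, huX⟩ :=
    geometric_hahn_banach_closed_point (convex_convexHull ℝ _) hclosed hX
  set c : Fin n → ℝ := fun i => f (fun j => if i = j then 1 else 0) with hc
  have hf : ∀ z : Fin n → ℝ, f z = ∑ i, c i * z i := by
    intro z
    conv_lhs => rw [pi_eq_sum_univ z]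
    rw [map_sum]
    exact Finset.sum_congr rfl fun i _ => by rw [map_smul, smul_eq_mul, mul_comm]
  obtain ⟨σ, hσ⟩ := key_perm ⟨h.1, h.2⟩ c
  have h1 : f (Y ∘ σ) < u := hfu _ (subset_convexHull ℝ _ ⟨σ, rfl⟩)
  have h2 : f X = ∑ i, c i * X i := hf X
  have h3 : f (Y ∘ σ) = ∑ i, c i * Y (σ i) := hf (Y ∘ σ)
  linarith



lemma hull_imp {n : ℕ} {X Y : Fin n → ℝ}
    (hX : X ∈ convexHull ℝ (Set.range fun σ : Equiv.Perm (Fin n) => Y ∘ σ))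
    (F : (Fin n → ℝ) → ℝ) (hF : ConvexOn ℝ Set.univ F)
    (hsym : ∀ (γ : Equiv.Perm (Fin n)) (x : Fin n → ℝ), F (x ∘ γ) = F x) :
    F X ≤ F Y := by
  rw [_root_.convexHull_eq] at hX
  obtain ⟨ι, t, w, z, hw0, hw1, hz, hcm⟩ := hX
  have hj := hF.map_centerMass_le hw0 (by rw [hw1]; norm_num)
    (fun i _ => Set.mem_univ (z i))
  rw [hcm] at hj
  refine hj.trans (le_of_eq ?_)
  have hFz : ∀ i ∈ t, (F ∘ z) i = F Y := by
    intro i hi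
    obtain ⟨σ, hσ⟩ := hz i hi
    simp only [Function.comp_apply, ← hσ, hsym]
  rw [Finset.centerMass_eq_of_sum_1 _ _ hw1, Finset.sum_congr rfl
    (fun i hi => by rw [smul_eq_mul, hFz i hi]), ← Finset.sum_mul, hw1, one_mul]

lemma convexOn_finsetSum {ι : Type*} {n : ℕ} (t : Finset ι) (f : ι → (Fin n → ℝ) → ℝ)
    (hf : ∀ i ∈ t, ConvexOn ℝ Set.univ (f i)) :
    ConvexOn ℝ Set.univ (fun x => ∑ i ∈ t, f i x) := by
  classical
  induction t using Finset.induction with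
  | empty => simpa using convexOn_const (0 : ℝ) convex_univ
  | @insert a s ha ih =>
    simp only [Finset.sum_insert ha]
    exact (hf a (Finset.mem_insert_self a s)).add
      (ih fun i hi => hf i (Finset.mem_insert_of_mem hi))

lemma convexOn_coordSub {n : ℕ} (i : Fin n) (t : ℝ) :
    ConvexOn ℝ Set.univ (fun z : Fin n → ℝ => z i - t) := by
  refine ⟨convex_univ, fun p _ q _ a b ha hb hab => le_of_eq ?_⟩
  simp only [Pi.add_apply, Pi.smul_apply, smul_eq_mul]
  linear_combination t * hab

lemma convexOn_maxCoord {n : ℕ} (i : Fin n) (t : ℝ) :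
    ConvexOn ℝ Set.univ (fun z : Fin n → ℝ => max (z i - t) 0) :=
  (convexOn_coordSub i t).sup (convexOn_const (0 : ℝ) convex_univ)

lemma convexOn_sumCoord {n : ℕ} :
    ConvexOn ℝ Set.univ (fun z : Fin n → ℝ => ∑ i, z i) :=
  convexOn_finsetSum univ (fun i z => z i) (fun i _ =>
    by simpa using convexOn_coordSub i 0)

lemma convexOn_negSumCoord {n : ℕ} :
    ConvexOn ℝ Set.univ (fun z : Fin n → ℝ => -∑ i, z i) := by
  refine ⟨convex_univ, fun p _ q _ a b ha hb hab => le_of_eq ?_⟩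
  simp only [Pi.add_apply, Pi.smul_apply, smul_eq_mul, Finset.sum_add_distrib,
    ← Finset.mul_sum]
  ring

lemma easy_dir {n : ℕ} {X Y : Fin n → ℝ}
    (h : ∀ F : (Fin n → ℝ) → ℝ, ConvexOn ℝ Set.univ F →
        (∀ (γ : Equiv.Perm (Fin n)) (x : Fin n → ℝ), F (x ∘ γ) = F x) →
        F X ≤ F Y) : IsMajorizedBy X Y := by
  constructor
  · have h1 := h (fun z => ∑ i, z i) convexOn_sumCoord
      (fun γ x => Equiv.sum_comp γ x)
    have h2 := h (fun z => -∑ i, z i) convexOn_negSumCoord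
      (fun γ x => by simp [Equiv.sum_comp γ x])
    try dsimp at h1 h2
    linarith
  · intro k
    set t : ℝ := Y (Tuple.sort Y k) with ht
    set F : (Fin n → ℝ) → ℝ := fun z => ∑ i, max (z i - t) 0 with hF
    have hFconv : ConvexOn ℝ Set.univ F :=
      convexOn_finsetSum univ (fun i z => max (z i - t) 0)
        (fun i _ => convexOn_maxCoord i t)
    have hFsym : ∀ (γ : Equiv.Perm (Fin n)) (x : Fin n → ℝ), F (x ∘ γ) = F x := by
      intro γ x
      exact Equiv.sum_comp γ (fun i => max (x i - t) 0)
    have hFXY := h F hFconv hFsym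
    have hmonoY : Monotone (Y ∘ Tuple.sort Y) := Tuple.monotone_sort Y
    have hmonoX : Monotone (X ∘ Tuple.sort X) := Tuple.monotone_sort X
    -- F Y = ∑_{i ∈ Ici k} (Y (sort Y i) - t)
    have hFY : F Y = ∑ i ∈ Ici k, (Y (Tuple.sort Y i) - t) := by
      have : F Y = ∑ i, max (Y (Tuple.sort Y i) - t) 0 :=
        (Equiv.sum_comp (Tuple.sort Y) (fun i => max (Y i - t) 0)).symm
      rw [this, ← Finset.sum_subset (Finset.subset_univ (Ici k))]
      · refine Finset.sum_congr rfl fun i hi => ?_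
        have : t ≤ Y (Tuple.sort Y i) := hmonoY (Finset.mem_Ici.1 hi)
        rw [max_eq_left (by linarith)]
      · intro i _ hi
        have hik : i < k := lt_of_not_ge (fun hc => hi (Finset.mem_Ici.2 hc))
        have : Y (Tuple.sort Y i) ≤ t := hmonoY hik.le
        rw [max_eq_right (by linarith)]
    have hFX : ∑ i ∈ Ici k, (X (Tuple.sort X i) - t) ≤ F X := by
      have h5 : F X = ∑ i, max (X (Tuple.sort X i) - t) 0 :=
        (Equiv.sum_comp (Tuple.sort X) (fun i => max (X i - t) 0)).symm
      rw [h5]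
      calc ∑ i ∈ Ici k, (X (Tuple.sort X i) - t)
          ≤ ∑ i ∈ Ici k, max (X (Tuple.sort X i) - t) 0 :=
            Finset.sum_le_sum fun i _ => le_max_left _ _
        _ ≤ ∑ i, max (X (Tuple.sort X i) - t) 0 :=
            Finset.sum_le_sum_of_subset_of_nonneg (Finset.subset_univ _)
              (fun i _ _ => le_max_right _ _)
    have hfin : ∑ i ∈ Ici k, (X (Tuple.sort X i) - t)
        ≤ ∑ i ∈ Ici k, (Y (Tuple.sort Y i) - t) := by
      calc ∑ i ∈ Ici k, (X (Tuple.sort X i) - t) ≤ F X := hFX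
        _ ≤ F Y := hFXY
        _ = _ := hFY
    have := Finset.sum_sub_distrib (s := Ici k) (f := fun i => X (Tuple.sort X i))
      (g := fun _ => t)
    simp only [Finset.sum_sub_distrib] at hfin
    linarith

theorem majorize_iff_convex_symmetric {n : ℕ} (X Y : Fin n → ℝ) :
    IsMajorizedBy X Y ↔
      ∀ F : (Fin n → ℝ) → ℝ, ConvexOn ℝ Set.univ F →
        (∀ (γ : Equiv.Perm (Fin n)) (x : Fin n → ℝ), F (x ∘ γ) = F x) →
        F X ≤ F Y := by
  constructor
  · intro h F hF hsym
    exact hull_imp (mem_hull h) F hF hsym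
  · exact easy_dir
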